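/- arXiv:0907.2577 — 2 statements merged into one kernel-verified Lean document; each statement's English description precedes it below -/
import Mathlib

section
/- For any prime p, any non-negative integers m and s, any positive integers N_1, N_2, …, N_k, and any integer L with 1 ≤ L ≤ max(N_1,…,N_k), the p-adic valuation of 𝐁_𝐍(m)·(H_{Lmp^s} − H_{L⌊m/p⌋p^{s+1}}) is at least −s, i.e., 𝐁_𝐍(m)·(H_{Lmp^s} − H_{L⌊m/p⌋p^{s+1}}) ∈ (1/p^s)·ℤ_p. -/
open Finset

/-- The `n`-th harmonic number `H_n = 1 + 1/2 + ⋯ + 1/n`, as a rational (`H_0 = 0`). -/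
def harm (n : ℕ) : ℚ := ∑ i ∈ Finset.range n, (1 : ℚ) / (i + 1)

/-- Subsets of the set of distinct prime factors of `N` having even cardinality. -/
def evenSub (N : ℕ) : Finset (Finset ℕ) :=
  N.primeFactors.powerset.filter fun J => Even J.card

/-- Subsets of the set of distinct prime factors of `N` having odd cardinality. -/
def oddSub (N : ℕ) : Finset (Finset ℕ) :=
  N.primeFactors.powerset.filter fun J => Odd J.card

/-- `∏_{j=1}^μ (α_j m)!`, where the `α_j` are the quotients of `N` by products of evenly
many distinct prime factors of `N`. -/
def Bnum (N m : ℕ) : ℕ :=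
  ∏ J ∈ evenSub N, Nat.factorial ((N / ∏ p ∈ J, p) * m)

/-- `∏_{j=1}^η (β_j m)!`, where the `β_j` are the quotients of `N` by products of oddly
many distinct prime factors of `N`, padded with `φ(N)` entries equal to `1` (so that
`Σ α_j = Σ β_j`). -/
def Bden (N m : ℕ) : ℕ :=
  (∏ J ∈ oddSub N, Nat.factorial ((N / ∏ p ∈ J, p) * m)) * (Nat.factorial m) ^ N.totient

/-- `𝐁_N(m) = (∏ (α_j m)!)/(∏ (β_j m)!)`. -/
noncomputable def BB (N m : ℕ) : ℚ := (Bnum N m : ℚ) / (Bden N m : ℚ)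

/-- `𝐁_𝐍(m) = ∏_{j=1}^k 𝐁_{N_j}(m)` for a vector `𝐍 = (N_1, …, N_k)`. -/
noncomputable def BBvec {k : ℕ} (N : Fin k → ℕ) (m : ℕ) : ℚ := ∏ i, BB (N i) m

/-! ### Auxiliary lemmas -/

/-- The number of integers in `(0, M]` coprime to `N`. -/
def Cop (N M : ℕ) : ℕ := ((Finset.Ioc 0 M).filter fun a => Nat.Coprime a N).card

lemma Cop_add (N M : ℕ) : Cop N (M + N) = Cop N M + N.totient := by
  have h1 : Finset.Ioc 0 (M + N) = Finset.Ioc 0 M ∪ Finset.Ioc M (M + N) :=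
    (Finset.Ioc_union_Ioc_eq_Ioc (Nat.zero_le M) (Nat.le_add_right M N)).symm
  have h2 : Disjoint (Finset.Ioc 0 M) (Finset.Ioc M (M + N)) := by
    rw [Finset.disjoint_left]; intro x hx hx'
    simp only [Finset.mem_Ioc] at hx hx'; omega
  rw [Cop, h1, Finset.filter_union,
    Finset.card_union_of_disjoint (Finset.disjoint_filter_filter h2)]
  congr 1
  have h3 : Finset.Ioc M (M + N) = Finset.Ico (M+1) (M+1+N) := by
    ext x; simp only [Finset.mem_Ioc, Finset.mem_Ico]; omega
  rw [h3, ← Nat.filter_coprime_Ico_eq_totient N (M+1)]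
  congr 1
  ext x
  simp only [Finset.mem_filter, and_congr_right_iff]
  exact fun _ => Nat.coprime_comm

lemma Cop_mul_add (N a y : ℕ) : Cop N (N * a + y) = a * N.totient + Cop N y := by
  induction a with
  | zero => simp
  | succ n ih =>
      have : N * (n+1) + y = (N * n + y) + N := by ring
      rw [this, Cop_add, ih]; ring

lemma one_le_Cop (N M : ℕ) (h : 1 ≤ M) : 1 ≤ Cop N M := by
  have : (1 : ℕ) ∈ (Finset.Ioc 0 M).filter fun a => Nat.Coprime a N := by
    simp [Finset.mem_Ioc, h, Nat.coprime_one_left]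
  exact Finset.card_pos.mpr ⟨1, this⟩

lemma prod_subset_primeFactors_dvd {N : ℕ} {J : Finset ℕ} (hJ : J ⊆ N.primeFactors) {a : ℕ}
    (h : ∀ q ∈ J, q ∣ a) : (∏ q ∈ J, q) ∣ a :=
  Finset.prod_primes_dvd a (fun q hq => (Nat.prime_of_mem_primeFactors (hJ hq)).prime) h

lemma alt_sum_div (N M : ℕ) (hN : N ≠ 0) :
    (∑ J ∈ N.primeFactors.powerset, (-1 : ℤ) ^ J.card * (M / ∏ q ∈ J, q : ℕ))
      = Cop N M := by
  have step1 : ∀ J ∈ N.primeFactors.powerset,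
      ((M / ∏ q ∈ J, q : ℕ) : ℤ)
        = ∑ a ∈ Finset.Ioc 0 M, (if (∏ q ∈ J, q) ∣ a then (1:ℤ) else 0) := by
    intro J _
    rw [← Nat.Ioc_filter_dvd_card_eq_div M (∏ q ∈ J, q), Finset.card_filter]
    push_cast
    rfl
  calc (∑ J ∈ N.primeFactors.powerset, (-1 : ℤ) ^ J.card * (M / ∏ q ∈ J, q : ℕ))
      = ∑ J ∈ N.primeFactors.powerset, ∑ a ∈ Finset.Ioc 0 M,
          (-1 : ℤ) ^ J.card * (if (∏ q ∈ J, q) ∣ a then (1:ℤ) else 0) := by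
        refine Finset.sum_congr rfl fun J hJ => ?_
        rw [step1 J hJ, Finset.mul_sum]
    _ = ∑ a ∈ Finset.Ioc 0 M, ∑ J ∈ N.primeFactors.powerset,
          (-1 : ℤ) ^ J.card * (if (∏ q ∈ J, q) ∣ a then (1:ℤ) else 0) := Finset.sum_comm
    _ = ∑ a ∈ Finset.Ioc 0 M, (if Nat.Coprime a N then (1:ℤ) else 0) := by
        refine Finset.sum_congr rfl fun a ha => ?_
        set Sa := N.primeFactors.filter (· ∣ a) with hSa
        have hiff : ∀ J ∈ N.primeFactors.powerset, ((∏ q ∈ J, q) ∣ a ↔ J ⊆ Sa) := by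
          intro J hJ
          rw [Finset.mem_powerset] at hJ
          constructor
          · intro hd q hq
            exact Finset.mem_filter.mpr ⟨hJ hq, (Finset.dvd_prod_of_mem _ hq).trans hd⟩
          · intro h
            exact prod_subset_primeFactors_dvd hJ fun q hq => (Finset.mem_filter.mp (h hq)).2
        calc (∑ J ∈ N.primeFactors.powerset,
              (-1 : ℤ) ^ J.card * (if (∏ q ∈ J, q) ∣ a then (1:ℤ) else 0))
            = ∑ J ∈ N.primeFactors.powerset, (if J ⊆ Sa then (-1 : ℤ) ^ J.card else 0) := by
              refine Finset.sum_congr rfl fun J hJ => ?_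
              rw [if_congr (hiff J hJ) rfl rfl, mul_ite, mul_one, mul_zero]
          _ = ∑ J ∈ N.primeFactors.powerset.filter (· ⊆ Sa), (-1 : ℤ) ^ J.card :=
              (Finset.sum_filter _ _).symm
          _ = ∑ J ∈ Sa.powerset, (-1 : ℤ) ^ J.card := by
              congr 1
              ext J
              simp only [Finset.mem_filter, Finset.mem_powerset]
              constructor
              · exact fun h => h.2
              · intro h
                exact ⟨h.trans (Finset.filter_subset _ _), h⟩
          _ = if Sa = ∅ then 1 else 0 := Finset.sum_powerset_neg_one_pow_card
          _ = if Nat.Coprime a N then (1:ℤ) else 0 := by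
              congr 1
              rw [eq_iff_iff, hSa, Finset.filter_eq_empty_iff]
              constructor
              · intro h
                by_contra hc
                obtain ⟨q, hq, hqa, hqN⟩ := Nat.Prime.not_coprime_iff_dvd.mp hc
                exact h (Nat.mem_primeFactors.mpr ⟨hq, hqN, hN⟩) hqa
              · intro h q hq hqa
                obtain ⟨hqp, hqN, -⟩ := Nat.mem_primeFactors.mp hq
                exact Nat.Prime.not_coprime_iff_dvd.mpr ⟨q, hqp, hqa, hqN⟩ h
    _ = Cop N M := by
        rw [Cop, Finset.card_filter]
        push_cast
        rfl

lemma even_odd_sum_div (N M : ℕ) (hN : N ≠ 0) :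
    (∑ J ∈ evenSub N, ((M / ∏ q ∈ J, q : ℕ) : ℤ))
      = (∑ J ∈ oddSub N, ((M / ∏ q ∈ J, q : ℕ) : ℤ)) + Cop N M := by
  have h := alt_sum_div N M hN
  rw [← Finset.sum_filter_add_sum_filter_not N.primeFactors.powerset
    (fun J => Even J.card)] at h
  have he : ∀ J ∈ N.primeFactors.powerset.filter (fun J => Even J.card),
      (-1 : ℤ) ^ J.card * (M / ∏ q ∈ J, q : ℕ) = ((M / ∏ q ∈ J, q : ℕ) : ℤ) := by
    intro J hJ
    rw [(Finset.mem_filter.mp hJ).2.neg_one_pow, one_mul]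
  have ho : ∀ J ∈ N.primeFactors.powerset.filter (fun J => ¬ Even J.card),
      (-1 : ℤ) ^ J.card * (M / ∏ q ∈ J, q : ℕ) = -((M / ∏ q ∈ J, q : ℕ) : ℤ) := by
    intro J hJ
    rw [(Nat.not_even_iff_odd.mp (Finset.mem_filter.mp hJ).2).neg_one_pow, neg_one_mul]
  rw [Finset.sum_congr rfl he, Finset.sum_congr rfl ho, Finset.sum_neg_distrib] at h
  have hodd : N.primeFactors.powerset.filter (fun J => ¬ Even J.card) = oddSub N := by
    rw [oddSub]
    congr 1
    ext J
    exact Nat.not_even_iff_odd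
  rw [hodd] at h
  rw [evenSub]
  linarith

lemma key1 (N m d : ℕ) (hN : N ≠ 0) (hd : 0 < d) :
    ∑ J ∈ evenSub N, ((N / ∏ q ∈ J, q) * m) / d
      = (∑ J ∈ oddSub N, ((N / ∏ q ∈ J, q) * m) / d) + N.totient * (m / d)
        + Cop N ((N * (m % d)) / d) := by
  have hJd : ∀ J ∈ N.primeFactors.powerset,
      ((N / ∏ q ∈ J, q) * m) / d = ((N * m) / d) / (∏ q ∈ J, q) := by
    intro J hJ
    rw [Finset.mem_powerset] at hJ
    have hdJ : 0 < ∏ q ∈ J, q :=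
      Finset.prod_pos fun q hq => (Nat.prime_of_mem_primeFactors (hJ hq)).pos
    obtain ⟨c, hc⟩ := prod_subset_primeFactors_dvd hJ
      (fun q hq => Nat.dvd_of_mem_primeFactors (hJ hq))
    rw [hc, Nat.mul_div_cancel_left _ hdJ, Nat.div_div_eq_div_mul, mul_comm d,
      ← Nat.div_div_eq_div_mul, mul_assoc, Nat.mul_div_cancel_left _ hdJ]
  have hre : ∑ J ∈ evenSub N, ((N / ∏ q ∈ J, q) * m) / d
      = ∑ J ∈ evenSub N, ((N * m) / d) / (∏ q ∈ J, q) :=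
    Finset.sum_congr rfl fun J hJ => hJd J (Finset.filter_subset _ _ hJ)
  have hro : ∑ J ∈ oddSub N, ((N / ∏ q ∈ J, q) * m) / d
      = ∑ J ∈ oddSub N, ((N * m) / d) / (∏ q ∈ J, q) :=
    Finset.sum_congr rfl fun J hJ => hJd J (Finset.filter_subset _ _ hJ)
  have hM : (N * m) / d = N * (m / d) + (N * (m % d)) / d := by
    have h1 : N * m = N * (m % d) + d * (N * (m / d)) := by
      conv_lhs => rw [← Nat.mod_add_div m d]
      ring
    rw [h1, Nat.add_mul_div_left _ _ hd, Nat.add_comm]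
  have hC : Cop N ((N * m) / d)
      = (m / d) * N.totient + Cop N ((N * (m % d)) / d) := by
    rw [hM, Cop_mul_add]
  have h := even_odd_sum_div N ((N * m) / d) hN
  rw [hre, hro]
  have : ((∑ J ∈ evenSub N, ((N * m) / d) / (∏ q ∈ J, q) : ℕ) : ℤ)
      = ((∑ J ∈ oddSub N, ((N * m) / d) / (∏ q ∈ J, q)
          + N.totient * (m / d) + Cop N ((N * (m % d)) / d) : ℕ) : ℤ) := by
    push_cast
    push_cast at h
    rw [h, hC]
    push_cast
    ring
  exact_mod_cast this

lemma Bden_mul_pow_dvd (p : ℕ) [hp : Fact p.Prime] {N m t : ℕ} (hN : N ≠ 0)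
    (hcond : ∀ r, 1 ≤ r → r ≤ t → p ^ r ≤ N * (m % p ^ r)) :
    Bden N m * p ^ t ∣ Bnum N m := by
  have hBnum : Bnum N m ≠ 0 :=
    Finset.prod_ne_zero_iff.mpr fun J _ => (Nat.factorial_pos _).ne'
  have hBdenl : (∏ J ∈ oddSub N, Nat.factorial ((N / ∏ p ∈ J, p) * m)) ≠ 0 :=
    Finset.prod_ne_zero_iff.mpr fun J _ => (Nat.factorial_pos _).ne'
  have hBdenr : (Nat.factorial m) ^ N.totient ≠ 0 :=
    pow_ne_zero _ (Nat.factorial_pos _).ne'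
  have hBden : Bden N m ≠ 0 := mul_ne_zero hBdenl hBdenr
  rw [← Nat.factorization_le_iff_dvd
    (mul_ne_zero hBden (pow_ne_zero _ hp.out.ne_zero)) hBnum, Finsupp.le_def]
  intro q
  by_cases hq : q.Prime
  swap
  · simp [Nat.factorization_eq_zero_of_not_prime _ hq]
  haveI : Fact q.Prime := ⟨hq⟩
  set b := max (Nat.log q (N * m) + 1) (t + 1) with hb
  have hfac : ∀ x : ℕ, x ≤ N * m →
      (x.factorial).factorization q = ∑ r ∈ Finset.Ico 1 b, x / q ^ r := by
    intro x hx
    rw [Nat.factorization_def _ hq]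
    exact padicValNat_factorial (lt_of_le_of_lt (Nat.log_mono_right hx)
      (lt_of_lt_of_le (Nat.lt_succ_self _) (le_max_left _ _)))
  have hxle : ∀ J : Finset ℕ, (N / ∏ qq ∈ J, qq) * m ≤ N * m :=
    fun J => Nat.mul_le_mul_right m (Nat.div_le_self N _)
  have hmle : m ≤ N * m := Nat.le_mul_of_pos_left m (Nat.pos_of_ne_zero hN)
  have hnum : (Bnum N m).factorization q
      = ∑ r ∈ Finset.Ico 1 b, ∑ J ∈ evenSub N, ((N / ∏ qq ∈ J, qq) * m) / q ^ r := by
    rw [Bnum, Nat.factorization_prod (fun J _ => (Nat.factorial_pos _).ne'),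
      Finset.sum_apply']
    rw [Finset.sum_congr rfl fun J (_ : J ∈ evenSub N) => hfac _ (hxle J)]
    exact Finset.sum_comm
  have hden : (Bden N m).factorization q
      = ∑ r ∈ Finset.Ico 1 b, (∑ J ∈ oddSub N, ((N / ∏ qq ∈ J, qq) * m) / q ^ r
          + N.totient * (m / q ^ r)) := by
    rw [Bden, Nat.factorization_mul hBdenl hBdenr, Finsupp.add_apply,
      Nat.factorization_pow, Finsupp.smul_apply, smul_eq_mul,
      Nat.factorization_prod (fun J _ => (Nat.factorial_pos _).ne'),
      Finset.sum_apply',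
      Finset.sum_congr rfl fun J (_ : J ∈ oddSub N) => hfac _ (hxle J),
      hfac m hmle, Finset.sum_comm, Finset.mul_sum, ← Finset.sum_add_distrib]
  have hkey : ∀ r ∈ Finset.Ico 1 b,
      ∑ J ∈ evenSub N, ((N / ∏ qq ∈ J, qq) * m) / q ^ r
        = (∑ J ∈ oddSub N, ((N / ∏ qq ∈ J, qq) * m) / q ^ r
            + N.totient * (m / q ^ r)) + Cop N ((N * (m % q ^ r)) / q ^ r) := by
    intro r _
    rw [key1 N m (q ^ r) hN (pow_pos hq.pos r)]
  rw [hnum, Finset.sum_congr rfl hkey, Finset.sum_add_distrib, ← hden,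
    Nat.factorization_mul hBden (pow_ne_zero _ hp.out.ne_zero), Finsupp.add_apply,
    hp.out.factorization_pow, add_comm ((Bden N m).factorization q)]
  rw [add_comm ((Bden N m).factorization q) _]
  apply Nat.add_le_add_right
  by_cases hqp : q = p
  · subst hqp
    rw [Finsupp.single_eq_same]
    calc t = ∑ _r ∈ Finset.Ico 1 (t + 1), 1 := by
            rw [Finset.sum_const, Nat.card_Ico, smul_eq_mul, mul_one]; omega
      _ ≤ ∑ r ∈ Finset.Ico 1 (t + 1), Cop N ((N * (m % q ^ r)) / q ^ r) := by
            apply Finset.sum_le_sum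
            intro r hr
            rw [Finset.mem_Ico] at hr
            exact one_le_Cop _ _ ((Nat.one_le_div_iff (pow_pos hq.pos r)).mpr
              (hcond r hr.1 (by omega)))
      _ ≤ ∑ r ∈ Finset.Ico 1 b, Cop N ((N * (m % q ^ r)) / q ^ r) :=
            Finset.sum_le_sum_of_subset
              (Finset.Ico_subset_Ico le_rfl (le_max_right _ _))
  · rw [Finsupp.single_eq_of_ne' (fun h => hqp h.symm)]
    exact Nat.zero_le _

lemma cond_lemma {p : ℕ} (hp : 1 < p) {m s t L Nx n : ℕ} (hLN : L ≤ Nx)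
    (hn1 : L * (m / p) * p ^ (s + 1) < n) (hn2 : n ≤ L * m * p ^ s)
    (hd : p ^ (s + t) ∣ n) :
    ∀ r, 1 ≤ r → r ≤ t → p ^ r ≤ Nx * (m % p ^ r) := by
  intro r hr1 hrt
  have hp0 : 0 < p := by omega
  obtain ⟨w, hw⟩ := hd
  obtain ⟨t', rfl⟩ : ∃ t', t = t' + 1 := ⟨t - 1, by omega⟩
  obtain ⟨r', rfl⟩ : ∃ r', r = r' + 1 := ⟨r - 1, by omega⟩
  set a := m / p ^ (r' + 1) with ha
  by_contra hc
  push_neg at hc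
  set z := m % p ^ (r' + 1) with hz
  have hzm : m = p ^ (r' + 1) * a + z := by
    rw [hz, ha]; exact (Nat.div_add_mod m _).symm
  have hup : p ^ (t' + 1) * w ≤ L * m := by
    have h' : p ^ s * (p ^ (t' + 1) * w) ≤ p ^ s * (L * m) := by
      calc p ^ s * (p ^ (t' + 1) * w) = p ^ (s + (t' + 1)) * w := by ring
        _ = n := hw.symm
        _ ≤ L * m * p ^ s := hn2
        _ = p ^ s * (L * m) := by ring
    exact Nat.le_of_mul_le_mul_left h' (pow_pos hp0 s)
  have h4 : L * (m / p) < p ^ t' * w := by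
    have h' : p ^ (s + 1) * (L * (m / p)) < p ^ (s + 1) * (p ^ t' * w) := by
      calc p ^ (s + 1) * (L * (m / p)) = L * (m / p) * p ^ (s + 1) := by ring
        _ < n := hn1
        _ = p ^ (s + 1) * (p ^ t' * w) := by rw [hw]; ring
    exact Nat.lt_of_mul_lt_mul_left h'
  have hadiv : a * p ^ r' ≤ m / p := by
    rw [Nat.le_div_iff_mul_le hp0]
    calc a * p ^ r' * p = p ^ (r' + 1) * a := by ring
      _ ≤ m := Nat.le.intro hzm.symm
  have h5 : L * a * p ^ (r' + 1) < p ^ (t' + 1) * w := by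
    have h' : L * (a * p ^ r') < p ^ t' * w :=
      lt_of_le_of_lt (Nat.mul_le_mul_left L hadiv) h4
    calc L * a * p ^ (r' + 1) = (L * (a * p ^ r')) * p := by ring
      _ < (p ^ t' * w) * p := (Nat.mul_lt_mul_right hp0).mpr h'
      _ = p ^ (t' + 1) * w := by ring
  have hdvd : p ^ (r' + 1) ∣ p ^ (t' + 1) * w - L * a * p ^ (r' + 1) :=
    Nat.dvd_sub (Dvd.dvd.mul_right (pow_dvd_pow p hrt) w) ⟨L * a, by ring⟩
  have h6 : p ^ (r' + 1) ≤ p ^ (t' + 1) * w - L * a * p ^ (r' + 1) :=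
    Nat.le_of_dvd (by omega) hdvd
  have h7 : L * a * p ^ (r' + 1) + p ^ (r' + 1) ≤ p ^ (t' + 1) * w := by omega
  have h8 : p ^ (t' + 1) * w < L * a * p ^ (r' + 1) + p ^ (r' + 1) := by
    calc p ^ (t' + 1) * w ≤ L * m := hup
      _ = L * a * p ^ (r' + 1) + L * z := by rw [hzm]; ring
      _ ≤ L * a * p ^ (r' + 1) + Nx * z :=
          Nat.add_le_add_left (Nat.mul_le_mul_right z hLN) _
      _ < L * a * p ^ (r' + 1) + p ^ (r' + 1) := Nat.add_lt_add_left hc _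
  omega

lemma BB_eq_cast (p : ℕ) [hp : Fact p.Prime] {N m t : ℕ} (hN : N ≠ 0)
    (hcond : ∀ r, 1 ≤ r → r ≤ t → p ^ r ≤ N * (m % p ^ r)) :
    ∃ c : ℕ, p ^ t ∣ c ∧ BB N m = (c : ℚ) := by
  obtain ⟨c0, hc0⟩ := Bden_mul_pow_dvd p hN hcond
  have hBden : (Bden N m : ℚ) ≠ 0 := by
    have : Bden N m ≠ 0 := mul_ne_zero
      (Finset.prod_ne_zero_iff.mpr fun J _ => (Nat.factorial_pos _).ne')
      (pow_ne_zero _ (Nat.factorial_pos _).ne')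
    exact_mod_cast this
  refine ⟨p ^ t * c0, Dvd.intro c0 rfl, ?_⟩
  rw [BB, hc0]
  push_cast
  rw [mul_assoc, mul_div_cancel_left₀ _ hBden]

/-- Lemma 3 (Krattenthaler–Rivoal). -/
theorem BBvec_mul_harm_diff_mem_inv_pow_p_zp (p : ℕ) [hp : Fact p.Prime] (m s : ℕ)
    {k : ℕ} (N : Fin k → ℕ) (hN : ∀ i, 0 < N i)
    (L : ℕ) (hL1 : 1 ≤ L) (hL2 : L ≤ Finset.univ.sup N) :
    ‖((BBvec N m * (harm (L * m * p ^ s) - harm (L * (m / p) * p ^ (s + 1))) : ℚ) : ℚ_[p])‖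
      ≤ (p : ℝ) ^ s := by
  rcases Nat.eq_zero_or_pos k with hk | hk
  · subst hk
    simp only [Finset.univ_eq_empty, Finset.sup_empty, Nat.bot_eq_zero] at hL2
    omega
  have hne : (Finset.univ : Finset (Fin k)).Nonempty := by
    rwa [Finset.univ_nonempty_iff, ← Fin.pos_iff_nonempty]
  obtain ⟨imax, -, hmax⟩ := Finset.exists_mem_eq_sup Finset.univ hne N
  set A := L * (m / p) * p ^ (s + 1) with hA
  set B := L * m * p ^ s with hB
  have hAB : A ≤ B := by
    rw [hA, hB, pow_succ]
    calc L * (m / p) * (p ^ s * p) = L * (m / p * p) * p ^ s := by ring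
      _ ≤ L * m * p ^ s := by
          exact Nat.mul_le_mul_right _ (Nat.mul_le_mul_left _ (Nat.div_mul_le_self m p))
  have hdiff : harm B - harm A = ∑ i ∈ Finset.Ico A B, (1 : ℚ) / (i + 1) :=
    (Finset.sum_Ico_eq_sub _ hAB).symm
  rw [hdiff, Finset.mul_sum]
  push_cast
  apply IsUltrametricDist.norm_sum_le_of_forall_le_of_nonneg
    (by positivity)
  intro i hi
  rw [Finset.mem_Ico] at hi
  set n := i + 1 with hn
  have hn0 : n ≠ 0 := Nat.succ_ne_zero i
  set u := padicValNat p n with hu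
  set t := u - s with ht
  -- the divisibility condition for the maximal N
  have hcondmax : ∀ r, 1 ≤ r → r ≤ t → p ^ r ≤ N imax * (m % p ^ r) := by
    intro r h1 h2
    have htpos : 1 ≤ t := le_trans h1 h2
    have hst : s + t = u := by
      have : s < u := by omega
      omega
    have hdvd : p ^ (s + t) ∣ n := by
      rw [hst, hu]
      exact pow_padicValNat_dvd
    have hLN : L ≤ N imax := hmax ▸ hL2
    exact cond_lemma hp.out.one_lt hLN (by omega) (by omega) hdvd r h1 h2
  -- each BB factor is a natural number; the max one is divisible by p^t
  have hBBi : ∀ j : Fin k, ∃ c : ℕ, (j = imax → p ^ t ∣ c) ∧ BB (N j) m = (c : ℚ) := by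
    intro j
    by_cases hj : j = imax
    · subst hj
      obtain ⟨c, hc1, hc2⟩ := BB_eq_cast p (hN j).ne' hcondmax
      exact ⟨c, fun _ => hc1, hc2⟩
    · obtain ⟨c, hc1, hc2⟩ := BB_eq_cast p (t := 0) (hN j).ne' (by omega)
      exact ⟨c, fun h => absurd h hj, hc2⟩
  choose c hc1 hc2 using hBBi
  have hBBvec : BBvec N m = ((∏ j, c j : ℕ) : ℚ) := by
    rw [BBvec]
    push_cast
    exact Finset.prod_congr rfl fun j _ => hc2 j
  have hdvd0 : (p : ℤ) ^ t ∣ ((∏ j, c j : ℕ) : ℤ) := by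
    have : p ^ t ∣ ∏ j, c j :=
      (hc1 imax rfl).trans (Finset.dvd_prod_of_mem c (Finset.mem_univ imax))
    exact_mod_cast this
  set n0 := ∏ j, c j with hn0'
  rw [hBBvec]
  -- now compute the norm
  have hnormn0 : ‖((n0 : ℚ) : ℚ_[p])‖ ≤ (p : ℝ) ^ (-(t : ℤ)) := by
    have : ((n0 : ℚ) : ℚ_[p]) = (((n0 : ℤ) : ℚ_[p])) := by push_cast; ring
    rw [this]
    exact (Padic.norm_int_le_pow_iff_dvd _ _).mpr hdvd0
  have hnormn : ‖((n : ℚ_[p]))‖ = (p : ℝ) ^ (-(u : ℤ)) := by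
    rw [Padic.norm_eq_zpow_neg_valuation (by exact_mod_cast hn0), Padic.valuation_natCast]
  have hterm : ((i : ℚ_[p]) + 1) = (n : ℚ_[p]) := by rw [hn]; push_cast; ring
  rw [one_div, hterm, norm_mul, norm_inv, hnormn]
  have hp1 : (1 : ℝ) ≤ (p : ℝ) := by exact_mod_cast hp.out.one_lt.le
  have hppos : (0 : ℝ) < (p : ℝ) := by positivity
  calc ‖((n0 : ℚ) : ℚ_[p])‖ * ((p : ℝ) ^ (-(u : ℤ)))⁻¹
      ≤ (p : ℝ) ^ (-(t : ℤ)) * (p : ℝ) ^ (u : ℤ) := by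
        rw [← zpow_neg, neg_neg]
        exact mul_le_mul_of_nonneg_right hnormn0 (zpow_nonneg hppos.le _)
    _ = (p : ℝ) ^ ((u : ℤ) - t) := by
        rw [← zpow_add₀ hppos.ne']
        ring_nf
    _ ≤ (p : ℝ) ^ (s : ℤ) := by
        apply zpow_le_zpow_right₀ hp1
        omega
    _ = (p : ℝ) ^ s := zpow_natCast _ _
end

section
/- For any vector 𝐍 = (N_1,…,N_k) of positive integers and any integer m ≥ 1, the integer 𝐁_𝐍(1) divides the integer 𝐁_𝐍(m). -/
open Finset

/-- number of `k ∈ (0, n]` coprime to `N` -/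
def phiCount (N n : ℕ) : ℕ := ((Finset.Ioc 0 n).filter (fun k => N.Coprime k)).card

lemma phiCount_zero (N : ℕ) : phiCount N 0 = 0 := by simp [phiCount]

lemma phiCount_mono (N : ℕ) {n n' : ℕ} (h : n ≤ n') : phiCount N n ≤ phiCount N n' :=
  Finset.card_le_card (Finset.filter_subset_filter _ (Finset.Ioc_subset_Ioc le_rfl h))

lemma phiCount_add (N n : ℕ) : phiCount N (n + N) = phiCount N n + N.totient := by
  have hunion : Finset.Ioc 0 n ∪ Finset.Ioc n (n + N) = Finset.Ioc 0 (n + N) :=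
    Finset.Ioc_union_Ioc_eq_Ioc (Nat.zero_le n) (Nat.le_add_right n N)
  have hdisj : Disjoint (Finset.Ioc 0 n) (Finset.Ioc n (n + N)) := by
    simp only [Finset.disjoint_left, Finset.mem_Ioc]
    omega
  have h2 : ((Finset.Ioc n (n + N)).filter (fun k => N.Coprime k)).card = N.totient := by
    have : Finset.Ioc n (n + N) = Finset.Ico (n + 1) ((n + 1) + N) := by
      rw [← Finset.Ico_add_one_add_one_eq_Ioc]
      congr 1
      omega
    rw [this]
    exact Nat.filter_coprime_Ico_eq_totient N (n + 1)
  rw [phiCount, ← hunion, Finset.filter_union,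
    Finset.card_union_of_disjoint (Finset.disjoint_filter_filter hdisj)]
  rw [phiCount] at *
  rw [h2]

lemma phiCount_period (N c r : ℕ) : phiCount N (N * c + r) = N.totient * c + phiCount N r := by
  induction c with
  | zero => simp
  | succ c ih =>
      have : N * (c + 1) + r = (N * c + r) + N := by ring
      rw [this, phiCount_add, ih]
      ring

lemma prodJ_pos {N : ℕ} {J : Finset ℕ} (hJ : J ⊆ N.primeFactors) : 0 < ∏ p ∈ J, p :=
  Finset.prod_pos fun p hp => (Nat.prime_of_mem_primeFactors (hJ hp)).pos

lemma prodJ_dvd {N : ℕ} {J : Finset ℕ} (hJ : J ⊆ N.primeFactors) : (∏ p ∈ J, p) ∣ N :=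
  Finset.prod_primes_dvd N (fun p hp => (Nat.prime_of_mem_primeFactors (hJ hp)).prime)
    (fun p hp => Nat.dvd_of_mem_primeFactors (hJ hp))

lemma prodJ_dvd_iff {N : ℕ} {J : Finset ℕ} (hJ : J ⊆ N.primeFactors) (k : ℕ) :
    (∏ p ∈ J, p) ∣ k ↔ ∀ p ∈ J, p ∣ k := by
  constructor
  · intro h p hp
    exact dvd_trans (Finset.dvd_prod_of_mem _ hp) h
  · intro h
    exact Finset.prod_primes_dvd k
      (fun p hp => (Nat.prime_of_mem_primeFactors (hJ hp)).prime) h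

lemma count_eq (N n : ℕ) (hN : 0 < N) :
    ((phiCount N n : ℤ)) =
      ∑ J ∈ N.primeFactors.powerset, (-1 : ℤ) ^ J.card * ((n / ∏ p ∈ J, p : ℕ) : ℤ) := by
  classical
  have pointwise : ∀ k ∈ Finset.Ioc 0 n,
      (if N.Coprime k then (1 : ℤ) else 0)
        = ∏ p ∈ N.primeFactors, ((if p ∣ k then (-1 : ℤ) else 0) + 1) := by
    intro k hk
    by_cases hco : N.Coprime k
    · rw [if_pos hco]
      rw [Finset.prod_congr rfl (fun p hp => ?_), Finset.prod_const_one]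
      have hpk : ¬ p ∣ k := by
        intro hdvd
        have hp' := Nat.prime_of_mem_primeFactors hp
        have : p ∣ Nat.gcd N k := Nat.dvd_gcd (Nat.dvd_of_mem_primeFactors hp) hdvd
        rw [hco] at this
        exact hp'.ne_one (Nat.dvd_one.mp this)
      rw [if_neg hpk]; ring
    · rw [if_neg hco]
      have hgcd : Nat.gcd N k ≠ 1 := hco
      obtain ⟨p, hp, hpdvd⟩ := Nat.exists_prime_and_dvd hgcd
      have hpN : p ∣ N := hpdvd.trans (Nat.gcd_dvd_left N k)
      have hpk : p ∣ k := hpdvd.trans (Nat.gcd_dvd_right N k)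
      refine (Finset.prod_eq_zero (i := p) ?_ ?_).symm
      · exact Nat.mem_primeFactors.mpr ⟨hp, hpN, hN.ne'⟩
      · rw [if_pos hpk]; ring
  have step1 : ((phiCount N n : ℤ))
      = ∑ k ∈ Finset.Ioc 0 n, (if N.Coprime k then (1 : ℤ) else 0) := by
    rw [phiCount]
    simp [Finset.sum_boole]
  rw [step1, Finset.sum_congr rfl pointwise]
  have expand : ∀ k, ∏ p ∈ N.primeFactors, ((if p ∣ k then (-1 : ℤ) else 0) + 1)
      = ∑ J ∈ N.primeFactors.powerset, (-1 : ℤ) ^ J.card * (if (∏ p ∈ J, p) ∣ k then 1 else 0) := by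
    intro k
    rw [Finset.prod_add]
    refine Finset.sum_congr rfl fun J hJ => ?_
    rw [Finset.prod_const_one, mul_one]
    have : ∀ p ∈ J, (if p ∣ k then (-1 : ℤ) else 0) = (-1) * (if p ∣ k then 1 else 0) := by
      intro p _; split <;> ring
    rw [Finset.prod_congr rfl this, Finset.prod_mul_distrib, Finset.prod_const,
      Finset.prod_boole]
    have := prodJ_dvd_iff (Finset.mem_powerset.mp hJ) k
    by_cases hall : ∀ p ∈ J, p ∣ k
    · rw [if_pos hall, if_pos (this.mpr hall)]
    · rw [if_neg hall, if_neg (fun h => hall (this.mp h))]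
  rw [Finset.sum_congr rfl (fun k _ => expand k), Finset.sum_comm]
  refine Finset.sum_congr rfl fun J hJ => ?_
  rw [← Finset.mul_sum]
  congr 1
  rw [Finset.sum_boole]
  norm_cast
  exact Nat.Ioc_filter_dvd_card_eq_div n _

lemma even_sub_odd (N n : ℕ) (hN : 0 < N) :
    (∑ J ∈ evenSub N, ((n / ∏ p ∈ J, p : ℕ) : ℤ))
      = (∑ J ∈ oddSub N, ((n / ∏ p ∈ J, p : ℕ) : ℤ)) + phiCount N n := by
  have h := count_eq N n hN
  rw [← Finset.sum_filter_add_sum_filter_not _ (fun J => Even J.card)] at h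
  have he : ∀ J ∈ N.primeFactors.powerset.filter (fun J => Even J.card),
      (-1 : ℤ) ^ J.card * ((n / ∏ p ∈ J, p : ℕ) : ℤ) = ((n / ∏ p ∈ J, p : ℕ) : ℤ) := by
    intro J hJ
    rw [(Finset.mem_filter.mp hJ).2.neg_one_pow, one_mul]
  have ho : ∀ J ∈ N.primeFactors.powerset.filter (fun J => ¬ Even J.card),
      (-1 : ℤ) ^ J.card * ((n / ∏ p ∈ J, p : ℕ) : ℤ) = -((n / ∏ p ∈ J, p : ℕ) : ℤ) := by
    intro J hJ
    rw [(Nat.not_even_iff_odd.mp (Finset.mem_filter.mp hJ).2).neg_one_pow]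
    ring
  rw [Finset.sum_congr rfl he, Finset.sum_congr rfl ho, Finset.sum_neg_distrib] at h
  have hoddset : N.primeFactors.powerset.filter (fun J => ¬ Even J.card) = oddSub N := by
    rw [oddSub]
    exact Finset.filter_congr fun J _ => by rw [Nat.not_even_iff_odd]
  rw [hoddset] at h
  have heset : N.primeFactors.powerset.filter (fun J => Even J.card) = evenSub N := rfl
  rw [heset] at h
  omega

lemma sumPhi_ge (p : ℕ) (hp : p.Prime) (N : ℕ) (hN : 0 < N) :
    ∀ m, 0 < m → ∀ b, N * m < p ^ b →
      ∑ i ∈ Finset.range b, (phiCount N (N / p ^ (i + 1)) + N.totient * (m / p ^ (i + 1)))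
        ≤ ∑ i ∈ Finset.range b, phiCount N ((N * m) / p ^ (i + 1)) := by
  intro m
  induction m using Nat.strong_induction_on with
  | _ m IH =>
  intro hm b hb
  by_cases hpm : p ∣ m
  · -- m = p * m'
    obtain ⟨m', rfl⟩ := hpm
    have hm' : 0 < m' := by
      rcases Nat.eq_zero_or_pos m' with h | h
      · subst h; simp at hm
      · exact h
    have hb1 : 1 ≤ b := by
      rcases b with _ | b
      · rw [pow_zero] at hb
        have h0 : 0 < N * (p * m') := Nat.mul_pos hN hm
        omega
      · omega
    obtain ⟨b', rfl⟩ : ∃ b', b = b' + 1 := ⟨b - 1, by omega⟩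
    have hNm' : N * m' < p ^ b' := by
      have : p * (N * m') < p * p ^ b' := by
        calc p * (N * m') = N * (p * m') := by ring
        _ < p ^ (b' + 1) := hb
        _ = p * p ^ b' := by rw [pow_succ]; ring
      exact Nat.lt_of_mul_lt_mul_left this
    have hdiv1 : ∀ i : ℕ, (N * (p * m')) / p ^ (i + 1 + 1) = (N * m') / p ^ (i + 1) := by
      intro i
      have : N * (p * m') = p * (N * m') := by ring
      rw [this, pow_succ, mul_comm (p ^ (i+1)) p, Nat.mul_div_mul_left _ _ hp.pos]
    have hdiv2 : ∀ i : ℕ, (p * m') / p ^ (i + 1 + 1) = m' / p ^ (i + 1) := by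
      intro i
      rw [pow_succ, mul_comm (p ^ (i+1)) p, Nat.mul_div_mul_left _ _ hp.pos]
    have hdiv3 : (N * (p * m')) / p ^ (0 + 1) = N * m' := by
      have : N * (p * m') = p * (N * m') := by ring
      rw [this, pow_one, Nat.mul_div_cancel_left _ hp.pos]
    have hdiv4 : (p * m') / p ^ (0 + 1) = m' := by
      rw [pow_one, Nat.mul_div_cancel_left _ hp.pos]
    -- RHS (big side)
    rw [Finset.sum_range_succ' (fun i => phiCount N ((N * (p * m')) / p ^ (i + 1))) b']
    simp only [hdiv1, hdiv3]
    -- LHS (small side): split sum of sums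
    rw [Finset.sum_add_distrib]
    rw [Finset.sum_range_succ (fun i => phiCount N (N / p ^ (i + 1))) b']
    rw [Finset.sum_range_succ' (fun i => N.totient * ((p * m') / p ^ (i + 1))) b']
    simp only [hdiv2, hdiv4]
    have hlast : phiCount N (N / p ^ (b' + 1)) = 0 := by
      have : N / p ^ (b' + 1) = 0 := Nat.div_eq_of_lt (by
        calc N ≤ N * (p * m') := Nat.le_mul_of_pos_right _ (by positivity)
        _ < p ^ (b' + 1) := hb)
      rw [this, phiCount_zero]
    rw [hlast]
    have hphiNm' : phiCount N (N * m') = N.totient * m' := by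
      have := phiCount_period N m' 0
      simpa [phiCount_zero] using this
    rw [hphiNm']
    have := IH m' (by have h2 := hp.two_le; nlinarith) hm' b' hNm'
    rw [Finset.sum_add_distrib] at this
    omega
  · -- p ∤ m : termwise
    refine Finset.sum_le_sum fun i _ => ?_
    set t := p ^ (i + 1) with ht
    have htpos : 0 < t := pow_pos hp.pos _
    have hs : 1 ≤ m % t := by
      rcases Nat.eq_zero_or_pos (m % t) with h | h
      · exfalso
        exact hpm (dvd_trans (dvd_pow_self p (Nat.succ_ne_zero i)) (Nat.dvd_of_mod_eq_zero h))
      · exact h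
    have hm_eq : m = t * (m / t) + m % t := (Nat.div_add_mod m t).symm
    have hNm : (N * m) / t = N * (m / t) + (N * (m % t)) / t := by
      conv_lhs => rw [hm_eq]
      have : N * (t * (m / t) + m % t) = N * (m % t) + (N * (m / t)) * t := by ring
      rw [this, Nat.add_mul_div_right _ _ htpos]
      ring
    rw [hNm]
    have : phiCount N (N * (m / t) + (N * (m % t)) / t)
        = N.totient * (m / t) + phiCount N ((N * (m % t)) / t) := phiCount_period N _ _
    rw [this]
    have hmono : phiCount N (N / t) ≤ phiCount N ((N * (m % t)) / t) :=
      phiCount_mono N (Nat.div_le_div_right (Nat.le_mul_of_pos_right N hs))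
    omega

lemma div_swap {N : ℕ} {J : Finset ℕ} (hJ : J ⊆ N.primeFactors) (M t : ℕ) :
    ((N / ∏ p ∈ J, p) * M) / t = ((N * M) / t) / (∏ p ∈ J, p) := by
  obtain ⟨e, he⟩ := prodJ_dvd hJ
  have hd : 0 < ∏ p ∈ J, p := prodJ_pos hJ
  rw [he, Nat.mul_div_cancel_left e hd, Nat.div_div_eq_div_mul,
    mul_comm t (∏ p ∈ J, p), ← Nat.mul_div_mul_left (e * M) t hd]
  congr 1
  ring

lemma key_ineq (p : ℕ) (pp : p.Prime) (N : ℕ) (hN : 0 < N) (m : ℕ) (hm : 1 ≤ m) :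
    (∑ J ∈ oddSub N, ∑ i ∈ Finset.range (N*m), ((N / ∏ q ∈ J, q) * m) / p ^ (i+1))
      + N.totient * (∑ i ∈ Finset.range (N*m), m / p ^ (i+1))
      + (∑ J ∈ evenSub N, ∑ i ∈ Finset.range (N*m), ((N / ∏ q ∈ J, q) * 1) / p ^ (i+1))
    ≤ (∑ J ∈ evenSub N, ∑ i ∈ Finset.range (N*m), ((N / ∏ q ∈ J, q) * m) / p ^ (i+1))
      + ((∑ J ∈ oddSub N, ∑ i ∈ Finset.range (N*m), ((N / ∏ q ∈ J, q) * 1) / p ^ (i+1))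
      + N.totient * (∑ i ∈ Finset.range (N*m), 1 / p ^ (i+1))) := by
  have hone : ∀ i : ℕ, 1 / p ^ (i+1) = 0 := fun i =>
    Nat.div_eq_of_lt (Nat.one_lt_pow (Nat.succ_ne_zero i) pp.one_lt)
  have hb : N * m < p ^ (N * m) :=
    lt_of_lt_of_le (Nat.lt_two_pow_self) (Nat.pow_le_pow_left pp.two_le _)
  have hB := sumPhi_ge p pp N hN m hm (N * m) hb
  have hesub : evenSub N ⊆ N.primeFactors.powerset := Finset.filter_subset _ _
  have hosub : oddSub N ⊆ N.primeFactors.powerset := Finset.filter_subset _ _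
  have hswap : ∀ S ⊆ N.primeFactors.powerset, ∀ M : ℕ,
      (∑ J ∈ S, ∑ i ∈ Finset.range (N*m), ((((N / ∏ q ∈ J, q) * M) / p ^ (i+1) : ℕ) : ℤ))
        = ∑ i ∈ Finset.range (N*m), ∑ J ∈ S, ((((N * M) / p ^ (i+1)) / (∏ q ∈ J, q) : ℕ) : ℤ) := by
    intro S hS M
    rw [Finset.sum_comm]
    refine Finset.sum_congr rfl fun i _ => Finset.sum_congr rfl fun J hJ => ?_
    have hJ' : J ⊆ N.primeFactors := Finset.mem_powerset.mp (hS hJ)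
    exact congrArg (Nat.cast) (div_swap hJ' M (p ^ (i+1)))
  have heo : ∀ M : ℕ,
      (∑ i ∈ Finset.range (N*m), ∑ J ∈ evenSub N, ((((N * M) / p ^ (i+1)) / (∏ q ∈ J, q) : ℕ) : ℤ))
        = (∑ i ∈ Finset.range (N*m), ∑ J ∈ oddSub N, ((((N * M) / p ^ (i+1)) / (∏ q ∈ J, q) : ℕ) : ℤ))
          + ∑ i ∈ Finset.range (N*m), ((phiCount N ((N * M) / p ^ (i+1)) : ℕ) : ℤ) := by
    intro M
    rw [← Finset.sum_add_distrib]
    exact Finset.sum_congr rfl fun i _ => even_sub_odd N _ hN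
  have H : (∑ J ∈ oddSub N, ∑ i ∈ Finset.range (N*m), ((((N / ∏ q ∈ J, q) * m) / p ^ (i+1) : ℕ) : ℤ))
      + (N.totient : ℤ) * (∑ i ∈ Finset.range (N*m), ((m / p ^ (i+1) : ℕ) : ℤ))
      + (∑ J ∈ evenSub N, ∑ i ∈ Finset.range (N*m), ((((N / ∏ q ∈ J, q) * 1) / p ^ (i+1) : ℕ) : ℤ))
      ≤ (∑ J ∈ evenSub N, ∑ i ∈ Finset.range (N*m), ((((N / ∏ q ∈ J, q) * m) / p ^ (i+1) : ℕ) : ℤ))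
      + ((∑ J ∈ oddSub N, ∑ i ∈ Finset.range (N*m), ((((N / ∏ q ∈ J, q) * 1) / p ^ (i+1) : ℕ) : ℤ))
      + (N.totient : ℤ) * (∑ i ∈ Finset.range (N*m), ((1 / p ^ (i+1) : ℕ) : ℤ))) := by
    rw [hswap _ hosub m, hswap _ hosub 1, hswap _ hesub m, hswap _ hesub 1, heo m, heo 1]
    rw [Finset.sum_add_distrib, ← Finset.mul_sum] at hB
    have hBz : (∑ i ∈ Finset.range (N*m), ((phiCount N (N / p ^ (i+1)) : ℕ) : ℤ))
        + (N.totient : ℤ) * ∑ i ∈ Finset.range (N*m), ((m / p ^ (i+1) : ℕ) : ℤ)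
        ≤ ∑ i ∈ Finset.range (N*m), ((phiCount N ((N * m) / p ^ (i+1)) : ℕ) : ℤ) := by
      exact_mod_cast hB
    simp only [mul_one, hone, Nat.cast_zero, Finset.sum_const_zero, mul_zero]
    linarith
  exact_mod_cast H

lemma key_dvd (N : ℕ) (hN : 0 < N) (m : ℕ) (hm : 1 ≤ m) :
    Bden N m * Bnum N 1 ∣ Bnum N m * Bden N 1 := by
  have hBnum : ∀ M, Bnum N M ≠ 0 := fun M =>
    Finset.prod_ne_zero_iff.mpr fun J _ => Nat.factorial_ne_zero _
  have hBden : ∀ M, Bden N M ≠ 0 := fun M =>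
    mul_ne_zero (Finset.prod_ne_zero_iff.mpr fun J _ => Nat.factorial_ne_zero _)
      (pow_ne_zero _ (Nat.factorial_ne_zero _))
  rw [← Nat.factorization_le_iff_dvd (mul_ne_zero (hBden m) (hBnum 1))
    (mul_ne_zero (hBnum m) (hBden 1)), Finsupp.le_def]
  intro p
  by_cases pp : p.Prime
  swap
  · simp [Nat.factorization_eq_zero_of_not_prime _ pp]
  haveI : Fact p.Prime := ⟨pp⟩
  have hfact : ∀ n, n ≤ N * m →
      (Nat.factorial n).factorization p = ∑ i ∈ Finset.range (N*m), n / p ^ (i+1) := by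
    intro n hn
    rw [Nat.factorization_def _ pp, padicValNat_factorial
      (b := N * m + 1) (lt_of_le_of_lt (Nat.log_le_self p n) (by omega)),
      Finset.sum_Ico_eq_sum_range]
    simp only [Nat.add_sub_cancel]
    exact Finset.sum_congr rfl fun i _ => by rw [Nat.add_comm]
  have hargle : ∀ (J : Finset ℕ) (M : ℕ), M ≤ m → (N / ∏ q ∈ J, q) * M ≤ N * m :=
    fun J M hM => Nat.mul_le_mul (Nat.div_le_self _ _) hM
  have hBnumf : ∀ M, M ≤ m → (Bnum N M).factorization p
      = ∑ J ∈ evenSub N, ∑ i ∈ Finset.range (N*m), ((N / ∏ q ∈ J, q) * M) / p ^ (i+1) := by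
    intro M hM
    rw [Bnum, Nat.factorization_prod fun J _ => Nat.factorial_ne_zero _,
      Finsupp.finset_sum_apply]
    exact Finset.sum_congr rfl fun J _ => hfact _ (hargle J M hM)
  have hBdenf : ∀ M, M ≤ m → (Bden N M).factorization p
      = (∑ J ∈ oddSub N, ∑ i ∈ Finset.range (N*m), ((N / ∏ q ∈ J, q) * M) / p ^ (i+1))
        + N.totient * (∑ i ∈ Finset.range (N*m), M / p ^ (i+1)) := by
    intro M hM
    rw [Bden, Nat.factorization_mul
        (Finset.prod_ne_zero_iff.mpr fun J _ => Nat.factorial_ne_zero _)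
        (pow_ne_zero _ (Nat.factorial_ne_zero _)),
      Finsupp.add_apply, Nat.factorization_pow, Finsupp.smul_apply, smul_eq_mul,
      Nat.factorization_prod fun J _ => Nat.factorial_ne_zero _,
      Finsupp.finset_sum_apply,
      hfact M (le_trans hM (Nat.le_mul_of_pos_left m hN))]
    congr 1
    exact Finset.sum_congr rfl fun J _ => hfact _ (hargle J M hM)
  rw [Nat.factorization_mul (hBden m) (hBnum 1), Nat.factorization_mul (hBnum m) (hBden 1),
    Finsupp.add_apply, Finsupp.add_apply, hBnumf m le_rfl, hBnumf 1 hm,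
    hBdenf m le_rfl, hBdenf 1 hm]
  exact key_ineq p pp N hN m hm

lemma Bnum_ne_zero (N M : ℕ) : Bnum N M ≠ 0 :=
  Finset.prod_ne_zero_iff.mpr fun J _ => Nat.factorial_ne_zero _

lemma Bden_ne_zero (N M : ℕ) : Bden N M ≠ 0 :=
  mul_ne_zero (Finset.prod_ne_zero_iff.mpr fun J _ => Nat.factorial_ne_zero _)
    (pow_ne_zero _ (Nat.factorial_ne_zero _))

/-- Lemma (Krattenthaler–Rivoal): for any vector `𝐍 = (N_1, …, N_k)` of positive
integers and any `m ≥ 1`, the integer `𝐁_𝐍(1)` divides the integer `𝐁_𝐍(m)`: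
their quotient is an integer. -/
theorem BBvec_one_dvd_BBvec {k : ℕ} (N : Fin k → ℕ) (hN : ∀ i, 0 < N i)
    (m : ℕ) (hm : 1 ≤ m) :
    ∃ c : ℤ, BBvec N m = BBvec N 1 * (c : ℚ) := by
  have hdvd : (∏ i : Fin k, (Bden (N i) m * Bnum (N i) 1))
      ∣ ∏ i : Fin k, (Bnum (N i) m * Bden (N i) 1) :=
    Finset.prod_dvd_prod_of_dvd _ _ fun i _ => key_dvd (N i) (hN i) m hm
  have hprodD : (∏ i : Fin k, (Bden (N i) m * Bnum (N i) 1)) ≠ 0 :=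
    Finset.prod_ne_zero_iff.mpr fun i _ => mul_ne_zero (Bden_ne_zero _ _) (Bnum_ne_zero _ _)
  refine ⟨(((∏ i : Fin k, (Bnum (N i) m * Bden (N i) 1))
      / (∏ i : Fin k, (Bden (N i) m * Bnum (N i) 1)) : ℕ) : ℤ), ?_⟩
  have hcast : (((∏ i : Fin k, (Bnum (N i) m * Bden (N i) 1))
        / (∏ i : Fin k, (Bden (N i) m * Bnum (N i) 1)) : ℕ) : ℚ)
      = ((∏ i : Fin k, (Bnum (N i) m * Bden (N i) 1) : ℕ) : ℚ)
        / ((∏ i : Fin k, (Bden (N i) m * Bnum (N i) 1) : ℕ) : ℚ) :=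
    Nat.cast_div hdvd (Nat.cast_ne_zero.mpr hprodD)
  push_cast at hcast
  rw [BBvec, BBvec]
  simp only [BB]
  rw [Finset.prod_div_distrib, Finset.prod_div_distrib, Int.cast_natCast, hcast]
  rw [Finset.prod_mul_distrib, Finset.prod_mul_distrib]
  have h1 : (∏ i : Fin k, (Bden (N i) m : ℚ)) ≠ 0 :=
    Finset.prod_ne_zero_iff.mpr fun i _ => Nat.cast_ne_zero.mpr (Bden_ne_zero _ _)
  have h2 : (∏ i : Fin k, (Bden (N i) 1 : ℚ)) ≠ 0 :=
    Finset.prod_ne_zero_iff.mpr fun i _ => Nat.cast_ne_zero.mpr (Bden_ne_zero _ _)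
  have h3 : (∏ i : Fin k, (Bnum (N i) 1 : ℚ)) ≠ 0 :=
    Finset.prod_ne_zero_iff.mpr fun i _ => Nat.cast_ne_zero.mpr (Bnum_ne_zero _ _)
  field_simp
end
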